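/- For n ≥ 1 and α, β ∈ (0,1], the measure P(C) = Z_n^{-1} Σ_{T ∈ R^{-1}{C}} α^{-l(T)} β^{-r(T)} is stationary for the open-boundary TASEP, where l(T) (resp. r(T)) is the number of internal vertices on the path from the leftmost (resp. rightmost) leaf to the root, and Z_n = Σ_{T ∈ T_n} α^{-l(T)} β^{-r(T)}. -/

import Mathlib

/-- Plane binary trees: every internal vertex has exactly two ordered children. -/
inductive PTree where
  | leaf : PTree
  | node : PTree → PTree → PTree
  deriving DecidableEq

namespace PTree

/-- number of leaves (endpoints) -/
def numLeaves : PTree → ℕ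
  | leaf => 1
  | node l r => numLeaves l + numLeaves r

/-- directions of the leaves of a subtree which is itself a `b`-child
(`true` = left child, `false` = right child), in left-to-right order. -/
def dirsAux : PTree → Bool → List Bool
  | leaf, b => [b]
  | node l r, _ => dirsAux l true ++ dirsAux r false

/-- the left/right-child directions of all leaves of a tree, left to right
(`true` = left child, `false` = right child). -/
def dirs : PTree → List Bool
  | leaf => []
  | node l r => dirsAux l true ++ dirsAux r false

/-- The reduction map `R`: the directions of the 2nd through (n+1)-th leaves;
`true` = • (occupied site, left child), `false` = ∘ (empty site, right child). -/
def red (T : PTree) : List Bool := ((dirs T).drop 1).dropLast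

/-- number of internal vertices on the path from the leftmost leaf to the root
(root included). -/
def lCount : PTree → ℕ
  | leaf => 0
  | node l _ => lCount l + 1

/-- number of internal vertices on the path from the rightmost leaf to the root
(root included). -/
def rCount : PTree → ℕ
  | leaf => 0
  | node _ r => rCount r + 1

/-- number of last branching vertices (internal vertices whose two children are leaves). -/
def lbCount : PTree → ℕ
  | leaf => 0
  | node leaf leaf => 1
  | node l r => lbCount l + lbCount r

end PTree

/-- Marked plane binary trees: a plane binary tree with exactly one of its
last branching vertices marked (the constructor `mark` is the marked vertex,
a vertex with two leaf children). -/
inductive MTree where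
  | mark : MTree
  | nodeL : MTree → PTree → MTree
  | nodeR : PTree → MTree → MTree
  deriving DecidableEq

namespace MTree

/-- forgetful map to plane binary trees -/
def forget : MTree → PTree
  | mark => .node .leaf .leaf
  | nodeL l r => .node (forget l) r
  | nodeR l r => .node l (forget r)

/-- collapse the marked vertex (with its two leaf children) to a single leaf. -/
def collapseT : MTree → PTree
  | mark => .leaf
  | nodeL l r => .node (collapseT l) r
  | nodeR l r => .node l (collapseT r)

/-- index (left to right, starting from 0) of the leaf of `collapseT` obtained
by collapsing the marked vertex. -/
def markIdx : MTree → ℕ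
  | mark => 0
  | nodeL l _ => markIdx l
  | nodeR l r => l.numLeaves + markIdx r

end MTree

/-- replace the `i`-th leaf of a tree by a marked last branching vertex. -/
def expand : PTree → ℕ → MTree
  | .leaf, _ => .mark
  | .node l r, i =>
      if i < l.numLeaves then .nodeL (expand l i) r
      else .nodeR l (expand r (i - l.numLeaves))

/-- index of the next right-child (`false`) leaf strictly after position `i`;
if there is none, the index of the rightmost left-child (`true`) leaf. -/
def nextFalseIdx (w : List Bool) (i : ℕ) : ℕ :=
  if (w.drop (i+1)).findIdx (fun b => !b) < (w.drop (i+1)).length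
  then i + 1 + (w.drop (i+1)).findIdx (fun b => !b)
  else w.length - 1 - (w.reverse.findIdx (fun b => b))

/-- index of the closest left-child (`true`) leaf strictly before position `i`;
if there is none, the index of the leftmost right-child (`false`) leaf. -/
def prevTrueIdx (w : List Bool) (i : ℕ) : ℕ :=
  if ((w.take i).reverse).findIdx (fun b => b) < i
  then i - 1 - ((w.take i).reverse).findIdx (fun b => b)
  else w.findIdx (fun b => !b)

/-- position of the leaf where the removed segment is re-glued by `π`. -/
def target (w : List Bool) (i : ℕ) : ℕ :=
  if w.getD i true then prevTrueIdx w i else nextFalseIdx w i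

/-- The map `π` on marked trees: remove the segment joining the marked vertex to
its left (resp. right) leaf when the marked vertex is a right (resp. left) child,
and glue it to the next right- (resp. left-) child leaf to the right (resp. left),
with the boundary rule when no such leaf exists; the new vertex is marked. -/
def piM (M : MTree) : MTree :=
  expand M.collapseT (target M.collapseT.dirs M.markIdx)

open Classical in
/-- Transition rates of the `n`-site open-boundary TASEP, on configurations
encoded as lists of booleans (`true` = •, `false` = ∘). -/
noncomputable def rate (α β : ℝ) (C C' : List Bool) : ℝ :=
  if ∃ A, C = false :: A ∧ C' = true :: A then α
  else if ∃ A, C = A ++ [true] ∧ C' = A ++ [false] then β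
  else if ∃ A A', C = A ++ true :: false :: A' ∧ C' = A ++ false :: true :: A' then 1
  else 0

/-- number of active bonds of a configuration: injection at site 1 if empty,
extraction at site n if occupied, and hops across •∘ pairs. -/
def activeCount (C : List Bool) : ℕ :=
  (if C.head? = some false then 1 else 0) +
  ((C.zip C.tail).count (true, false)) +
  (if C.getLast? = some true then 1 else 0)

/-- the weight `μ(T) = α^{-l(T)} β^{-r(T)}` of a plane binary tree. -/
noncomputable def mu (α β : ℝ) (T : PTree) : ℝ :=
  α ^ (-(T.lCount : ℤ)) * β ^ (-(T.rCount : ℤ))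

/-- number of internal vertices on the path from the leftmost leaf to the root,
excluding the marked vertex. -/
def lCountM : MTree → ℕ
  | .mark => 0
  | .nodeL l _ => lCountM l + 1
  | .nodeR l _ => l.lCount + 1

/-- number of internal vertices on the path from the rightmost leaf to the root,
excluding the marked vertex. -/
def rCountM : MTree → ℕ
  | .mark => 0
  | .nodeR _ r => rCountM r + 1
  | .nodeL _ r => r.rCount + 1

/-- the weight `μ̂` of a marked tree, excluding the marked vertex from the counts. -/
noncomputable def muHat (α β : ℝ) (M : MTree) : ℝ :=
  α ^ (-(lCountM M : ℤ)) * β ^ (-(rCountM M : ℤ))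


namespace PTree

lemma numLeaves_pos (T : PTree) : 0 < T.numLeaves := by
  induction T with
  | leaf => simp [numLeaves]
  | node l r ihl ihr => simp only [numLeaves]; omega

lemma length_dirsAux (T : PTree) (b : Bool) : (T.dirsAux b).length = T.numLeaves := by
  induction T generalizing b with
  | leaf => rfl
  | node l r ihl ihr => simp [dirsAux, numLeaves, ihl, ihr]

lemma dirsAux_ne_nil (T : PTree) (b : Bool) : T.dirsAux b ≠ [] := by
  intro h
  have h1 := length_dirsAux T b
  have h2 := numLeaves_pos T
  rw [h] at h1; simp at h1; omega

lemma head?_dirsAux (T : PTree) (b : Bool) :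
    (T.dirsAux b).head? = some (if T = leaf then b else true) := by
  induction T generalizing b with
  | leaf => rfl
  | node l r ihl ihr =>
    simp only [dirsAux, List.head?_append, ihl true]
    cases l <;> simp

lemma getLast?_dirsAux (T : PTree) (b : Bool) :
    (T.dirsAux b).getLast? = some (if T = leaf then b else false) := by
  induction T generalizing b with
  | leaf => rfl
  | node l r ihl ihr =>
    simp only [dirsAux, List.getLast?_append, ihr false]
    cases r <;> simp

lemma dirs_eq_dirsAux {T : PTree} (h : T ≠ leaf) : T.dirs = T.dirsAux true := by
  cases T with
  | leaf => exact absurd rfl h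
  | node l r => rfl

lemma length_dirs {T : PTree} (h : T ≠ leaf) : T.dirs.length = T.numLeaves := by
  rw [dirs_eq_dirsAux h, length_dirsAux]

lemma dirs_eq_red {T : PTree} (h : T ≠ leaf) : T.dirs = true :: T.red ++ [false] := by
  have hh : T.dirs.head? = some true := by
    rw [dirs_eq_dirsAux h, head?_dirsAux]; simp only [ite_self]
  have hl : T.dirs.getLast? = some false := by
    rw [dirs_eq_dirsAux h, getLast?_dirsAux, if_neg h]
  have hlen : 2 ≤ T.dirs.length := by
    rw [length_dirs h]
    cases T with
    | leaf => exact absurd rfl h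
    | node l r =>
      have := numLeaves_pos l; have := numLeaves_pos r
      simp only [numLeaves]; omega
  obtain ⟨a, t, hat⟩ : ∃ a t, T.dirs = a :: t := by
    cases hD : T.dirs with
    | nil => rw [hD] at hh; simp at hh
    | cons a t => exact ⟨a, t, rfl⟩
  rw [hat] at hh hl hlen ⊢
  have ha : a = true := by simpa using hh
  have ht : t ≠ [] := by
    intro h0; rw [h0] at hlen; simp at hlen
  rw [List.getLast?_eq_getLast_of_ne_nil (List.cons_ne_nil a t)] at hl
  have hlast : t.getLast ht = false := by
    have := List.getLast_cons (a := a) ht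
    rw [this] at hl; simpa using hl
  have := List.dropLast_append_getLast ht
  subst ha
  simp only [red, hat, List.drop_one, List.tail_cons, List.cons_append, List.cons.injEq, true_and]
  conv_lhs => rw [← this, hlast]

lemma red_length {T : PTree} (h : T ≠ leaf) : T.red.length + 2 = T.numLeaves := by
  have := length_dirs h
  rw [dirs_eq_red h] at this
  simp at this; omega

end PTree

lemma MTree.forget_ne_leaf (M : MTree) : M.forget ≠ PTree.leaf := by
  cases M <;> simp [MTree.forget]

lemma numLeaves_forget_expand (T : PTree) (i : ℕ) :
    (expand T i).forget.numLeaves = T.numLeaves + 1 := by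
  induction T generalizing i with
  | leaf => rfl
  | node l r ihl ihr =>
    rw [expand]
    split
    · simp only [MTree.forget, PTree.numLeaves, ihl]; omega
    · simp only [MTree.forget, PTree.numLeaves, ihr]; omega

open PTree

lemma expand_leaf (i : ℕ) : expand PTree.leaf i = MTree.mark := rfl

lemma expand_node (l r : PTree) (i : ℕ) : expand (PTree.node l r) i =
    (if i < l.numLeaves then .nodeL (expand l i) r
     else .nodeR l (expand r (i - l.numLeaves))) := rfl

lemma dirsAux_forget_expand (T : PTree) (b : Bool) (i : ℕ) (h : i < T.numLeaves) :
    (expand T i).forget.dirsAux b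
      = (T.dirsAux b).take i ++ true :: false :: (T.dirsAux b).drop (i + 1) := by
  induction T generalizing b i with
  | leaf =>
    have : i = 0 := by
      have := numLeaves_pos PTree.leaf
      simp [PTree.numLeaves] at h; omega
    subst this; rfl
  | node l r ihl ihr =>
    rw [expand]
    split
    · rename_i hi
      have hD : i ≤ (l.dirsAux true).length := by rw [length_dirsAux]; omega
      have hD' : i + 1 ≤ (l.dirsAux true).length := by rw [length_dirsAux]; omega
      simp only [MTree.forget, PTree.dirsAux, ihl true i hi]
      rw [List.take_append_of_le_length hD, List.drop_append_of_le_length hD']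
      simp
    · rename_i hi
      push_neg at hi
      have hr : i - l.numLeaves < r.numLeaves := by
        simp only [PTree.numLeaves] at h; omega
      have hD : (l.dirsAux true).length ≤ i := by rw [length_dirsAux]; omega
      have hD' : (l.dirsAux true).length ≤ i + 1 := by omega
      simp only [MTree.forget, PTree.dirsAux, ihr false _ hr]
      rw [List.take_append, List.drop_append,
        List.take_of_length_le hD, List.drop_eq_nil_of_le hD', length_dirsAux]
      have e1 : i + 1 - l.numLeaves = i - l.numLeaves + 1 := by omega
      simp [e1]

lemma dirs_forget_expand (T : PTree) (hT : T ≠ PTree.leaf) (i : ℕ) (h : i < T.numLeaves) :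
    (expand T i).forget.dirs = T.dirs.take i ++ true :: false :: T.dirs.drop (i + 1) := by
  rw [dirs_eq_dirsAux ((expand T i).forget_ne_leaf), dirs_eq_dirsAux hT,
    dirsAux_forget_expand T true i h]

lemma lCount_forget_expand_zero (T : PTree) : (expand T 0).forget.lCount = T.lCount + 1 := by
  induction T with
  | leaf => rfl
  | node l r ihl ihr =>
    rw [expand, if_pos (numLeaves_pos l)]
    simp only [MTree.forget, PTree.lCount, ihl]

lemma lCount_forget_expand (T : PTree) (i : ℕ) (h1 : 1 ≤ i) (h2 : i < T.numLeaves) :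
    (expand T i).forget.lCount = T.lCount := by
  induction T generalizing i with
  | leaf => simp [PTree.numLeaves] at h2; omega
  | node l r ihl ihr =>
    rw [expand]
    split
    · rename_i hi
      simp only [MTree.forget, PTree.lCount, ihl i h1 hi]
    · simp only [MTree.forget, PTree.lCount]

lemma rCount_forget_expand (T : PTree) (i : ℕ) (h : i + 1 < T.numLeaves) :
    (expand T i).forget.rCount = T.rCount := by
  induction T generalizing i with
  | leaf => simp [PTree.numLeaves] at h
  | node l r ihl ihr =>
    rw [expand]
    split
    · simp only [MTree.forget, PTree.rCount]
    · rename_i hi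
      push_neg at hi
      have : (i - l.numLeaves) + 1 < r.numLeaves := by
        simp only [PTree.numLeaves] at h; omega
      simp only [MTree.forget, PTree.rCount, ihr _ this]

lemma rCount_forget_expand_last (T : PTree) :
    (expand T (T.numLeaves - 1)).forget.rCount = T.rCount + 1 := by
  induction T with
  | leaf => rfl
  | node l r ihl ihr =>
    have hl := numLeaves_pos l
    have hr := numLeaves_pos r
    rw [expand, if_neg (by simp only [PTree.numLeaves]; omega)]
    have : l.numLeaves + r.numLeaves - 1 - l.numLeaves = r.numLeaves - 1 := by omega
    simp only [PTree.numLeaves, MTree.forget, PTree.rCount, this, ihr]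

lemma forget_expand_inj : ∀ (T T' : PTree) (i : ℕ), i < T.numLeaves → i < T'.numLeaves →
    (expand T i).forget = (expand T' i).forget → T = T' := by
  intro T
  induction T with
  | leaf =>
    intro T' i h h' heq
    cases T' with
    | leaf => rfl
    | node l r =>
      rw [expand_leaf, expand_node] at heq
      split at heq
      · simp only [MTree.forget, PTree.node.injEq] at heq
        exact absurd heq.1.symm (expand l i).forget_ne_leaf
      · simp only [MTree.forget, PTree.node.injEq] at heq
        exact absurd heq.2.symm (expand _ _).forget_ne_leaf
  | node l r ihl ihr =>
    intro T' i h h' heq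
    cases T' with
    | leaf =>
      rw [expand_leaf, expand_node] at heq
      split at heq
      · simp only [MTree.forget, PTree.node.injEq] at heq
        exact absurd heq.1 (expand _ _).forget_ne_leaf
      · simp only [MTree.forget, PTree.node.injEq] at heq
        exact absurd heq.2 (expand _ _).forget_ne_leaf
    | node l' r' =>
      rw [expand_node, expand_node] at heq
      split at heq <;> split at heq <;>
        simp only [MTree.forget, PTree.node.injEq] at heq
      · rename_i h1 h2
        rw [ihl l' i h1 h2 heq.1, heq.2]
      · rename_i h1 h2
        exfalso
        have : l'.numLeaves = l.numLeaves + 1 := by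
          rw [← heq.1, numLeaves_forget_expand]
        omega
      · rename_i h1 h2
        exfalso
        have : l.numLeaves = l'.numLeaves + 1 := by
          rw [heq.1, numLeaves_forget_expand]
        omega
      · rename_i h1 h2
        push_neg at h1 h2
        have hll : l = l' := heq.1
        subst hll
        have hr2 : i - l.numLeaves < r.numLeaves := by
          simp only [PTree.numLeaves] at h; omega
        have hr2' : i - l.numLeaves < r'.numLeaves := by
          simp only [PTree.numLeaves] at h'; omega
        rw [ihr r' _ hr2 hr2' heq.2]

lemma exists_expand_aux : ∀ (T : PTree) (b : Bool) (i : ℕ),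
    (T.dirsAux b)[i]? = some true → (T.dirsAux b)[i+1]? = some false →
    ∃ a : PTree, (expand a i).forget = T := by
  intro T
  induction T with
  | leaf =>
    intro b i h1 h2
    exfalso
    have := List.getElem?_eq_some_iff.mp h2
    simp [PTree.dirsAux] at this
  | node l r ihl ihr =>
    intro b i h1 h2
    have hDlen : (l.dirsAux true).length = l.numLeaves := length_dirsAux l true
    have hElen : (r.dirsAux false).length = r.numLeaves := length_dirsAux r false
    simp only [PTree.dirsAux] at h1 h2
    rcases lt_trichotomy (i + 1) (l.dirsAux true).length with hc | hc | hc
    · -- both inside l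
      rw [List.getElem?_append_left (by omega)] at h1
      rw [List.getElem?_append_left hc] at h2
      obtain ⟨a, ha⟩ := ihl true i h1 h2
      refine ⟨PTree.node a r, ?_⟩
      have hia : i < a.numLeaves := by
        have := numLeaves_forget_expand a i
        rw [ha] at this; omega
      rw [expand_node, if_pos hia]
      simp only [MTree.forget, ha]
    · -- boundary: i is last of D, i+1 first of E
      have hi : i < (l.dirsAux true).length := by omega
      rw [List.getElem?_append_left hi] at h1
      rw [List.getElem?_append_right (by omega), hc, Nat.sub_self] at h2
      -- l must be leaf
      have hl : l = PTree.leaf := by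
        by_contra hne
        have := getLast?_dirsAux l true
        rw [if_neg hne] at this
        rw [List.getLast?_eq_getElem?] at this
        have : (l.dirsAux true)[i]? = some false := by
          rw [← this]; congr 1; omega
        rw [h1] at this; simp at this
      have hr : r = PTree.leaf := by
        by_contra hne
        have := head?_dirsAux r false
        rw [if_neg hne] at this
        rw [List.head?_eq_getElem?] at this
        rw [h2] at this; simp at this
      subst hl; subst hr
      have hi0 : i = 0 := by
        simp [PTree.dirsAux] at hi; omega
      subst hi0
      exact ⟨PTree.leaf, rfl⟩
    · -- both inside r
      have hge : (l.dirsAux true).length ≤ i := by omega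
      rw [List.getElem?_append_right hge] at h1
      rw [List.getElem?_append_right (by omega)] at h2
      have e1 : i + 1 - (l.dirsAux true).length = (i - (l.dirsAux true).length) + 1 := by omega
      rw [e1] at h2
      obtain ⟨a, ha⟩ := ihr false _ h1 h2
      refine ⟨PTree.node l a, ?_⟩
      rw [expand_node, if_neg (by omega)]
      simp only [MTree.forget]
      rw [hDlen] at ha
      rw [ha]

lemma finite_numLeaves : ∀ m : ℕ, {T : PTree | T.numLeaves = m}.Finite := by
  intro m
  induction m using Nat.strong_induction_on with
  | _ m ih =>
    match m with
    | 0 =>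
      convert Set.finite_empty
      ext T
      simp only [Set.mem_setOf_eq, Set.mem_empty_iff_false, iff_false]
      intro h; have := numLeaves_pos T; omega
    | 1 =>
      apply Set.Finite.subset (Set.finite_singleton PTree.leaf)
      intro T hT
      cases T with
      | leaf => simp
      | node l r =>
        exfalso
        have := numLeaves_pos l; have := numLeaves_pos r
        simp only [Set.mem_setOf_eq, PTree.numLeaves] at hT; omega
    | (k+2) =>
      have hfin : (⋃ a ∈ Finset.range (k+2), ⋃ b ∈ Finset.range (k+2),
          ({T : PTree | T.numLeaves = a} ×ˢ {T : PTree | T.numLeaves = b})).Finite := by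
        apply Set.Finite.biUnion (Finset.range (k+2)).finite_toSet
        intro a ha
        apply Set.Finite.biUnion (Finset.range (k+2)).finite_toSet
        intro b hb
        exact (ih a (by simpa using ha)).prod (ih b (by simpa using hb))
      apply Set.Finite.subset (hfin.image (fun p => PTree.node p.1 p.2))
      intro T hT
      cases T with
      | leaf => simp [PTree.numLeaves] at hT
      | node l r =>
        simp only [Set.mem_setOf_eq, PTree.numLeaves] at hT
        have hl := numLeaves_pos l; have hr := numLeaves_pos r
        refine ⟨(l, r), ?_, rfl⟩
        simp only [Set.mem_iUnion, Set.mem_prod, Set.mem_setOf_eq]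
        exact ⟨l.numLeaves, by simp [Finset.mem_range]; omega,
               r.numLeaves, by simp [Finset.mem_range]; omega, rfl, rfl⟩

noncomputable def treesN (m : ℕ) : Finset PTree := (finite_numLeaves m).toFinset

lemma mem_treesN {m : ℕ} {T : PTree} : T ∈ treesN m ↔ T.numLeaves = m := by
  simp [treesN, Set.Finite.mem_toFinset]

noncomputable def redF (w : List Bool) : Finset PTree :=
  (treesN (w.length + 2)).filter (fun T => T.red = w)

lemma mem_redF {w : List Bool} {T : PTree} :
    T ∈ redF w ↔ T.numLeaves = w.length + 2 ∧ T.red = w := by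
  simp [redF, Finset.mem_filter, mem_treesN]

lemma mem_redF_ne_leaf {w : List Bool} {T : PTree} (h : T ∈ redF w) : T ≠ PTree.leaf := by
  intro he
  rw [mem_redF] at h
  rw [he] at h
  simp [PTree.numLeaves] at h

noncomputable def FF (α β : ℝ) (w : List Bool) : ℝ := ∑ T ∈ redF w, mu α β T

lemma red_of_dirs {T : PTree} (hT : T ≠ PTree.leaf) {w : List Bool}
    (h : T.dirs = true :: (w ++ [false])) : T.red = w := by
  rw [dirs_eq_red hT] at h
  simp only [List.cons_append, List.cons.injEq, true_and] at h
  exact List.append_cancel_right h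

lemma mu_succ_l (α β : ℝ) (T T' : PTree) (hα : α ≠ 0)
    (hl : T'.lCount = T.lCount + 1) (hr : T'.rCount = T.rCount) :
    mu α β T' = α⁻¹ * mu α β T := by
  unfold mu
  rw [hl, hr, show (-(↑(T.lCount + 1)) : ℤ) = (-1) + -(T.lCount : ℤ) by push_cast; ring,
    zpow_add₀ hα, zpow_neg_one]
  ring

lemma mu_succ_r (α β : ℝ) (T T' : PTree) (hβ : β ≠ 0)
    (hl : T'.lCount = T.lCount) (hr : T'.rCount = T.rCount + 1) :
    mu α β T' = β⁻¹ * mu α β T := by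
  unfold mu
  rw [hl, hr, show (-(↑(T.rCount + 1)) : ℤ) = (-1) + -(T.rCount : ℤ) by push_cast; ring,
    zpow_add₀ hβ, zpow_neg_one]
  ring

lemma FF_A (α β : ℝ) (hα : α ≠ 0) (v : List Bool) :
    α * FF α β (false :: v) = FF α β v := by
  have key : ∑ T ∈ redF v, (α⁻¹ * mu α β T) = FF α β (false :: v) := by
    rw [FF]
    refine Finset.sum_bij (i := fun a _ => (expand a 0).forget) ?_ ?_ ?_ ?_
    · -- membership
      intro a ha
      rw [mem_redF] at ha ⊢
      obtain ⟨ha1, ha2⟩ := ha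
      have hane : a ≠ PTree.leaf := by
        intro he; rw [he] at ha1; simp [PTree.numLeaves] at ha1
      have hda : a.dirs = true :: (v ++ [false]) := by
        rw [dirs_eq_red hane, ha2]; simp
      have hd : (expand a 0).forget.dirs = true :: ((false :: v) ++ [false]) := by
        rw [dirs_forget_expand a hane 0 (numLeaves_pos a), hda]
        simp
      constructor
      · rw [numLeaves_forget_expand, ha1]; simp
      · exact red_of_dirs ((expand a 0).forget_ne_leaf) hd
    · -- injectivity
      intro a1 h1 a2 h2 heq
      exact forget_expand_inj a1 a2 0 (numLeaves_pos a1) (numLeaves_pos a2) heq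
    · -- surjectivity
      intro b hb
      rw [mem_redF] at hb
      obtain ⟨hb1, hb2⟩ := hb
      have hbne : b ≠ PTree.leaf := by
        intro he; rw [he] at hb1; simp [PTree.numLeaves] at hb1
      have hdb : b.dirs = true :: false :: (v ++ [false]) := by
        rw [dirs_eq_red hbne, hb2]; simp
      obtain ⟨a, ha⟩ : ∃ a : PTree, (expand a 0).forget = b := by
        apply exists_expand_aux b true 0 <;>
          rw [← dirs_eq_dirsAux hbne, hdb] <;> simp
      have hna : a.numLeaves = v.length + 2 := by
        have := numLeaves_forget_expand a 0
        rw [ha, hb1] at this; simp at this; omega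
      have hane : a ≠ PTree.leaf := by
        intro he; rw [he] at hna; simp [PTree.numLeaves] at hna
      have hexp := dirs_forget_expand a hane 0 (numLeaves_pos a)
      rw [ha, hdb] at hexp
      simp only [List.take_zero, List.nil_append, List.cons.injEq, true_and] at hexp
      have hra : a.red = v := by
        have := dirs_eq_red hane
        rw [List.drop_one, this] at hexp
        simp only [List.cons_append, List.tail_cons] at hexp
        exact List.append_cancel_right hexp.symm
      exact ⟨a, mem_redF.mpr ⟨hna, hra⟩, ha⟩
    · -- weights
      intro a ha
      rw [mem_redF] at ha
      have hane : a ≠ PTree.leaf := by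
        intro he; rw [he] at ha; simp [PTree.numLeaves] at ha
      refine (mu_succ_l α β a _ hα (lCount_forget_expand_zero a) ?_).symm
      apply rCount_forget_expand
      rw [ha.1]; omega
  rw [← key, Finset.mul_sum, FF]
  apply Finset.sum_congr rfl
  intro T _
  rw [← mul_assoc, mul_inv_cancel₀ hα, one_mul]

lemma FF_B (α β : ℝ) (hβ : β ≠ 0) (v : List Bool) :
    β * FF α β (v ++ [true]) = FF α β v := by
  have key : ∑ T ∈ redF v, (β⁻¹ * mu α β T) = FF α β (v ++ [true]) := by
    rw [FF]
    refine Finset.sum_bij (i := fun a _ => (expand a (v.length + 1)).forget) ?_ ?_ ?_ ?_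
    · intro a ha
      rw [mem_redF] at ha ⊢
      obtain ⟨ha1, ha2⟩ := ha
      have hane : a ≠ PTree.leaf := by
        intro he; rw [he] at ha1; simp [PTree.numLeaves] at ha1
      have hda : a.dirs = (true :: v) ++ [false] := by
        rw [dirs_eq_red hane, ha2]
      have hd : (expand a (v.length + 1)).forget.dirs
          = true :: ((v ++ [true]) ++ [false]) := by
        rw [dirs_forget_expand a hane _ (by omega)]
        have e1 : a.dirs.take (v.length + 1) = true :: v := by
          rw [hda, show v.length + 1 = (true :: v).length from by simp, List.take_left]
        have e2 : a.dirs.drop (v.length + 1 + 1) = [] := by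
          apply List.drop_eq_nil_of_le
          rw [length_dirs hane, ha1]
        rw [e1, e2]; simp
      constructor
      · rw [numLeaves_forget_expand, ha1]; simp
      · exact red_of_dirs ((expand a _).forget_ne_leaf) hd
    · intro a1 h1 a2 h2 heq
      rw [mem_redF] at h1 h2
      exact forget_expand_inj a1 a2 _ (by omega) (by omega) heq
    · intro b hb
      rw [mem_redF] at hb
      obtain ⟨hb1, hb2⟩ := hb
      have hbne : b ≠ PTree.leaf := by
        intro he; rw [he] at hb1; simp [PTree.numLeaves] at hb1
      have hdb : b.dirs = (true :: v) ++ [true, false] := by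
        rw [dirs_eq_red hbne, hb2]; simp
      obtain ⟨a, ha⟩ : ∃ a : PTree, (expand a (v.length + 1)).forget = b := by
        apply exists_expand_aux b true (v.length + 1) <;>
          rw [← dirs_eq_dirsAux hbne, hdb]
        · rw [show v.length + 1 = (true :: v).length from by simp,
            List.getElem?_append_right (le_refl _), Nat.sub_self]
          rfl
        · rw [show v.length + 1 + 1 = (true :: v).length + 1 from by simp,
            List.getElem?_append_right (by simp)]
          simp
      have hna : a.numLeaves = v.length + 2 := by
        have := numLeaves_forget_expand a (v.length + 1)
        rw [ha, hb1] at this; simp at this; omega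
      have hane : a ≠ PTree.leaf := by
        intro he; rw [he] at hna; simp [PTree.numLeaves] at hna
      have hlen : a.dirs.length = v.length + 2 := by rw [length_dirs hane, hna]
      have hexp := dirs_forget_expand a hane (v.length + 1) (by omega)
      rw [ha, hdb] at hexp
      have hdrop : a.dirs.drop (v.length + 1 + 1) = [] :=
        List.drop_eq_nil_of_le (by omega)
      rw [hdrop] at hexp
      have htake : a.dirs.take (v.length + 1) = true :: v := by
        have hl2 : (true :: v).length = (a.dirs.take (v.length + 1)).length := by
          simp [hlen]
        exact ((List.append_inj hexp hl2).1).symm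
      have hlast : a.dirs[v.length + 1]? = some false := by
        have hgl : a.dirs.getLast? = some false := by
          rw [dirs_eq_dirsAux hane, getLast?_dirsAux, if_neg hane]
        rw [List.getLast?_eq_getElem?, hlen] at hgl
        simpa using hgl
      have hd2 : a.dirs.drop (v.length + 1) = [false] := by
        rw [List.drop_eq_getElem_cons (by omega), hdrop]
        have h5 := List.getElem?_eq_getElem (l := a.dirs) (i := v.length + 1) (by omega)
        rw [hlast] at h5
        rw [← Option.some_injective _ h5]
      have hda : a.dirs = true :: (v ++ [false]) := by
        conv_lhs => rw [← List.take_append_drop (v.length + 1) a.dirs]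
        rw [htake, hd2]
        simp
      exact ⟨a, mem_redF.mpr ⟨hna, red_of_dirs hane hda⟩, ha⟩
    · intro a ha
      rw [mem_redF] at ha
      have hane : a ≠ PTree.leaf := by
        intro he; rw [he] at ha; simp [PTree.numLeaves] at ha
      refine (mu_succ_r α β a _ hβ ?_ ?_).symm
      · exact lCount_forget_expand a _ (by omega) (by omega)
      · have h6 := rCount_forget_expand_last a
        rw [ha.1, show v.length + 2 - 1 = v.length + 1 from rfl] at h6
        exact h6
  rw [← key, Finset.mul_sum, FF]
  apply Finset.sum_congr rfl
  intro T _
  rw [← mul_assoc, mul_inv_cancel₀ hβ, one_mul]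

lemma mu_eq_of_counts (α β : ℝ) (T T' : PTree)
    (hl : T'.lCount = T.lCount) (hr : T'.rCount = T.rCount) :
    mu α β T' = mu α β T := by
  unfold mu; rw [hl, hr]

lemma FF_C (α β : ℝ) (A B : List Bool) :
    FF α β (A ++ true :: false :: B)
      = FF α β (A ++ true :: B) + FF α β (A ++ false :: B) := by
  have hdisj : Disjoint (redF (A ++ true :: B)) (redF (A ++ false :: B)) := by
    rw [Finset.disjoint_left]
    intro T h1 h2
    rw [mem_redF] at h1 h2
    have := h1.2.symm.trans h2.2
    have := List.append_cancel_left this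
    simp at this
  rw [show FF α β (A ++ true :: B) + FF α β (A ++ false :: B)
      = ∑ T ∈ redF (A ++ true :: B) ∪ redF (A ++ false :: B), mu α β T from
    (Finset.sum_union hdisj).symm, FF]
  refine (Finset.sum_bij (i := fun a _ => (expand a (A.length + 1)).forget) ?_ ?_ ?_ ?_).symm
  · intro a ha
    rw [Finset.mem_union, mem_redF, mem_redF] at ha
    obtain ⟨d, ha1, ha2⟩ : ∃ d, a.numLeaves = A.length + B.length + 3 ∧ a.red = A ++ d :: B := by
      rcases ha with h | h
      · exact ⟨true, by simp at h ⊢; omega, h.2⟩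
      · exact ⟨false, by simp at h ⊢; omega, h.2⟩
    have hane : a ≠ PTree.leaf := by
      intro he; rw [he] at ha1; simp [PTree.numLeaves] at ha1
    have hda : a.dirs = (true :: A) ++ (d :: (B ++ [false])) := by
      rw [dirs_eq_red hane, ha2]; simp
    rw [mem_redF]
    have hd : (expand a (A.length + 1)).forget.dirs
        = true :: ((A ++ true :: false :: B) ++ [false]) := by
      rw [dirs_forget_expand a hane _ (by omega)]
      have e1 : a.dirs.take (A.length + 1) = true :: A := by
        rw [hda, show A.length + 1 = (true :: A).length from by simp, List.take_left]
      have e2 : a.dirs.drop (A.length + 1 + 1) = B ++ [false] := by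
        rw [hda, show (true :: A) ++ (d :: (B ++ [false]))
            = ((true :: A) ++ [d]) ++ (B ++ [false]) from by simp,
          show A.length + 1 + 1 = ((true :: A) ++ [d]).length from by simp, List.drop_left]
      rw [e1, e2]; simp
    constructor
    · rw [numLeaves_forget_expand, ha1]; simp; omega
    · exact red_of_dirs ((expand a _).forget_ne_leaf) hd
  · intro a1 h1 a2 h2 heq
    rw [Finset.mem_union, mem_redF, mem_redF] at h1 h2
    have n1 : A.length + 1 < a1.numLeaves := by
      rcases h1 with h | h <;> (rw [h.1]; simp)
    have n2 : A.length + 1 < a2.numLeaves := by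
      rcases h2 with h | h <;> (rw [h.1]; simp)
    exact forget_expand_inj a1 a2 _ n1 n2 heq
  · intro b hb
    rw [mem_redF] at hb
    obtain ⟨hb1, hb2⟩ := hb
    have hbne : b ≠ PTree.leaf := by
      intro he; rw [he] at hb1; simp [PTree.numLeaves] at hb1
    have hdb : b.dirs = (true :: A) ++ (true :: false :: (B ++ [false])) := by
      rw [dirs_eq_red hbne, hb2]; simp
    obtain ⟨a, ha⟩ : ∃ a : PTree, (expand a (A.length + 1)).forget = b := by
      apply exists_expand_aux b true (A.length + 1) <;>
        rw [← dirs_eq_dirsAux hbne, hdb]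
      · rw [show A.length + 1 = (true :: A).length from by simp,
          List.getElem?_append_right (le_refl _), Nat.sub_self]
        rfl
      · rw [show A.length + 1 + 1 = (true :: A).length + 1 from by simp,
          List.getElem?_append_right (by simp)]
        simp
    have hna : a.numLeaves = A.length + B.length + 3 := by
      have := numLeaves_forget_expand a (A.length + 1)
      rw [ha, hb1] at this; simp at this; omega
    have hane : a ≠ PTree.leaf := by
      intro he; rw [he] at hna; simp [PTree.numLeaves] at hna
    have hlen : a.dirs.length = A.length + B.length + 3 := by rw [length_dirs hane, hna]
    have hexp := dirs_forget_expand a hane (A.length + 1) (by omega)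
    rw [ha, hdb] at hexp
    have htake : a.dirs.take (A.length + 1) = true :: A := by
      have hl2 : (true :: A).length = (a.dirs.take (A.length + 1)).length := by
        simp [hlen]; omega
      exact ((List.append_inj hexp hl2).1).symm
    have hdrop : a.dirs.drop (A.length + 1 + 1) = B ++ [false] := by
      have h7 := (List.append_inj hexp (by simp [hlen]; omega)).2
      simp only [List.cons.injEq, true_and] at h7
      exact h7.symm
    have hda : a.dirs = true :: ((A ++ (a.dirs[A.length + 1]'(by omega)) :: B) ++ [false]) := by
      conv_lhs => rw [← List.take_append_drop (A.length + 1) a.dirs]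
      rw [htake, List.drop_eq_getElem_cons (by omega), hdrop]
      simp
    refine ⟨a, ?_, ha⟩
    rw [Finset.mem_union, mem_redF, mem_redF]
    have hred := red_of_dirs hane hda
    cases hd : a.dirs[A.length + 1]'(by omega)
    · rw [hd] at hred
      right
      exact ⟨by rw [hna]; simp; omega, hred⟩
    · rw [hd] at hred
      left
      exact ⟨by rw [hna]; simp; omega, hred⟩
  · intro a ha
    rw [Finset.mem_union, mem_redF, mem_redF] at ha
    have hnl : a.numLeaves = A.length + B.length + 3 := by
      rcases ha with h | h <;> (rw [h.1]; simp; omega)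
    refine (mu_eq_of_counts α β a _ ?_ ?_).symm
    · exact lCount_forget_expand a _ (by omega) (by omega)
    · exact rCount_forget_expand a _ (by omega)

def cl1 (X Y : List Bool) : Prop := ∃ A, X = false :: A ∧ Y = true :: A
def cl2 (X Y : List Bool) : Prop := ∃ A, X = A ++ [true] ∧ Y = A ++ [false]
def cl3 (X Y : List Bool) : Prop :=
  ∃ A A', X = A ++ true :: false :: A' ∧ Y = A ++ false :: true :: A'

open Classical in
lemma rate_def (α β : ℝ) (X Y : List Bool) :
    rate α β X Y = if cl1 X Y then α else if cl2 X Y then β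
      else if cl3 X Y then (1:ℝ) else 0 := rfl

lemma cl12 {X Y : List Bool} (h1 : cl1 X Y) (h2 : cl2 X Y) : False := by
  obtain ⟨A, hX, hY⟩ := h1
  obtain ⟨B, hX', hY'⟩ := h2
  cases B with
  | nil => rw [hX] at hX'; simp at hX'
  | cons b B' =>
    rw [hX] at hX'; rw [hY] at hY'
    simp only [List.cons_append, List.cons.injEq] at hX' hY'
    rw [← hX'.1] at hY'
    simp at hY'

lemma cl13 {X Y : List Bool} (h1 : cl1 X Y) (h3 : cl3 X Y) : False := by
  obtain ⟨A, hX, hY⟩ := h1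
  obtain ⟨D, D', hX', hY'⟩ := h3
  cases D with
  | nil => rw [hX] at hX'; simp at hX'
  | cons d D₂ =>
    rw [hX] at hX'; rw [hY] at hY'
    simp only [List.cons_append, List.cons.injEq] at hX' hY'
    rw [← hX'.1] at hY'
    simp at hY'

lemma cl23 {X Y : List Bool} (h2 : cl2 X Y) (h3 : cl3 X Y) : False := by
  obtain ⟨B, hX, hY⟩ := h2
  obtain ⟨D, D', hX', hY'⟩ := h3
  have e1 : X.getLast? = some true := by rw [hX]; simp
  have e2 : Y.getLast? = some false := by rw [hY]; simp
  cases D' with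
  | nil =>
    rw [hX'] at e1
    simp [List.getLast?_append] at e1
  | cons c D₂ =>
    rw [hX'] at e1; rw [hY'] at e2
    simp only [List.getLast?_append] at e1 e2
    have : (c :: D₂).getLast? = some true := by
      simpa [List.getLast?_append] using e1
    have h2' : (c :: D₂).getLast? = some false := by
      simpa [List.getLast?_append] using e2
    rw [this] at h2'
    simp at h2'

lemma cl1_iff {X Y : List Bool} :
    cl1 X Y ↔ X[0]? = some false ∧ Y = X.set 0 true := by
  constructor
  · rintro ⟨A, rfl, rfl⟩
    simp
  · rintro ⟨h1, rfl⟩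
    cases X with
    | nil => simp at h1
    | cons x A =>
      simp at h1
      exact ⟨A, by rw [h1], by simp⟩

lemma cl1_iff' {X Y : List Bool} :
    cl1 X Y ↔ Y[0]? = some true ∧ X = Y.set 0 false := by
  constructor
  · rintro ⟨A, rfl, rfl⟩
    simp
  · rintro ⟨h1, rfl⟩
    cases Y with
    | nil => simp at h1
    | cons y A =>
      simp at h1
      exact ⟨A, by simp, by rw [h1]⟩

lemma set_last (A : List Bool) (a b : Bool) : (A ++ [a]).set A.length b = A ++ [b] := by
  rw [List.set_append_right _ _ (le_refl _), Nat.sub_self]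
  rfl

lemma cl2_iff {X Y : List Bool} :
    cl2 X Y ↔ X.getLast? = some true ∧ Y = X.set (X.length - 1) false := by
  constructor
  · rintro ⟨A, rfl, rfl⟩
    refine ⟨by simp, ?_⟩
    rw [show (A ++ [true]).length - 1 = A.length from by simp, set_last]
  · rintro ⟨h1, rfl⟩
    have hne : X ≠ [] := by intro h; rw [h] at h1; simp at h1
    obtain ⟨A, a, hX⟩ : ∃ A a, X = A ++ [a] :=
      ⟨X.dropLast, X.getLast hne, (List.dropLast_append_getLast hne).symm⟩
    subst hX
    have ha : a = true := by simpa using h1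
    subst ha
    exact ⟨A, rfl, by
      rw [show (A ++ [true]).length - 1 = A.length from by simp, set_last]⟩

lemma cl2_iff' {X Y : List Bool} :
    cl2 X Y ↔ Y.getLast? = some false ∧ X = Y.set (Y.length - 1) true := by
  constructor
  · rintro ⟨A, rfl, rfl⟩
    refine ⟨by simp, ?_⟩
    rw [show (A ++ [false]).length - 1 = A.length from by simp, set_last]
  · rintro ⟨h1, rfl⟩
    have hne : Y ≠ [] := by intro h; rw [h] at h1; simp at h1
    obtain ⟨A, a, hY⟩ : ∃ A a, Y = A ++ [a] :=
      ⟨Y.dropLast, Y.getLast hne, (List.dropLast_append_getLast hne).symm⟩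
    subst hY
    have ha : a = false := by simpa using h1
    subst ha
    exact ⟨A, by
      rw [show (A ++ [false]).length - 1 = A.length from by simp, set_last], rfl⟩

def cl3At (j : ℕ) (X Y : List Bool) : Prop :=
  X[j]? = some true ∧ X[j+1]? = some false ∧ Y = (X.set j false).set (j+1) true

def cl3At' (j : ℕ) (X Y : List Bool) : Prop :=
  Y[j]? = some false ∧ Y[j+1]? = some true ∧ X = (Y.set j true).set (j+1) false

lemma set2_mid (A A' : List Bool) (a b c d : Bool) :
    ((A ++ a :: b :: A').set A.length c).set (A.length + 1) d = A ++ c :: d :: A' := by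
  rw [List.set_append_right _ _ (le_refl _), Nat.sub_self]
  have h1 : (A ++ (a :: b :: A').set 0 c).set (A.length + 1) d
      = A ++ ((a :: b :: A').set 0 c).set 1 d := by
    rw [List.set_append_right _ _ (by omega), Nat.add_sub_cancel_left]
  rw [h1]
  rfl

lemma set2_mid' (A A' : List Bool) {j : ℕ} (hj : A.length = j) (a b c d : Bool) :
    ((A ++ a :: b :: A').set j c).set (j + 1) d = A ++ c :: d :: A' := by
  subst hj; exact set2_mid A A' a b c d

lemma list_decomp_two {X : List Bool} {j : ℕ} (h : j + 1 < X.length) :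
    X = X.take j ++ X[j]'(by omega) :: X[j+1]'h :: X.drop (j+2) := by
  conv_lhs => rw [← List.take_append_drop j X]
  rw [List.drop_eq_getElem_cons (by omega), List.drop_eq_getElem_cons h]

lemma list_decomp_two' {X : List Bool} {j : ℕ} {a b : Bool}
    (h1 : X[j]? = some a) (h2 : X[j+1]? = some b) :
    X = X.take j ++ a :: b :: X.drop (j+2) := by
  have hlt : j + 1 < X.length := (List.getElem?_eq_some_iff.mp h2).1
  have e1 : X[j]'(by omega) = a := by
    have := List.getElem?_eq_getElem (l := X) (i := j) (by omega)
    rw [h1] at this; exact (Option.some_injective _ this).symm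
  have e2 : X[j+1]'hlt = b := by
    have := List.getElem?_eq_getElem (l := X) (i := j+1) hlt
    rw [h2] at this; exact (Option.some_injective _ this).symm
  conv_lhs => rw [list_decomp_two hlt]
  rw [e1, e2]

lemma cl3_iff {X Y : List Bool} : cl3 X Y ↔ ∃ j, cl3At j X Y := by
  constructor
  · rintro ⟨A, A', rfl, rfl⟩
    refine ⟨A.length, ?_, ?_, ?_⟩
    · rw [List.getElem?_append_right (le_refl _), Nat.sub_self]; rfl
    · rw [List.getElem?_append_right (by omega), Nat.add_sub_cancel_left]; simp
    · rw [set2_mid]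
  · rintro ⟨j, h1, h2, rfl⟩
    have hlt : j + 1 < X.length := (List.getElem?_eq_some_iff.mp h2).1
    have hlen : (X.take j).length = j := by simp; omega
    have hX : X = X.take j ++ true :: false :: X.drop (j+2) := list_decomp_two' h1 h2
    refine ⟨X.take j, X.drop (j+2), ?_, ?_⟩
    · conv_lhs => rw [hX]
    · conv_lhs => rw [hX]
      exact set2_mid' _ _ hlen _ _ _ _

lemma cl3_iff' {X Y : List Bool} : cl3 X Y ↔ ∃ j, cl3At' j X Y := by
  constructor
  · rintro ⟨A, A', rfl, rfl⟩
    refine ⟨A.length, ?_, ?_, ?_⟩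
    · rw [List.getElem?_append_right (le_refl _), Nat.sub_self]; rfl
    · rw [List.getElem?_append_right (by omega), Nat.add_sub_cancel_left]; simp
    · rw [set2_mid]
  · rintro ⟨j, h1, h2, rfl⟩
    have hlt : j + 1 < Y.length := (List.getElem?_eq_some_iff.mp h2).1
    have hlen : (Y.take j).length = j := by simp; omega
    have hY : Y = Y.take j ++ false :: true :: Y.drop (j+2) := list_decomp_two' h1 h2
    refine ⟨Y.take j, Y.drop (j+2), ?_, ?_⟩
    · conv_lhs => rw [hY]
      exact set2_mid' _ _ hlen _ _ _ _
    · conv_lhs => rw [hY]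

lemma cl3At_unique {X Y : List Bool} {j j' : ℕ} (h : cl3At j X Y) (h' : cl3At j' X Y) :
    j = j' := by
  by_contra hne
  obtain ⟨ha1, ha2, ha3⟩ := h
  obtain ⟨hb1, hb2, hb3⟩ := h'
  have hj : j < X.length := (List.getElem?_eq_some_iff.mp ha1).1
  have e1 : Y[j]? = some false := by
    rw [ha3, List.getElem?_set_ne (by omega), List.getElem?_set_self (by simpa using hj)]
  rcases eq_or_ne j (j' + 1) with he | he
  · have e2 : Y[j]? = some true := by
      subst he
      rw [hb3, List.getElem?_set_self (by simp; omega)]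
    rw [e1] at e2; simp at e2
  · have e2 : Y[j]? = X[j]? := by
      rw [hb3, List.getElem?_set_ne (by omega), List.getElem?_set_ne (by omega)]
    rw [e1, ha1] at e2; simp at e2

lemma cl3At'_unique {X Y : List Bool} {j j' : ℕ} (h : cl3At' j X Y) (h' : cl3At' j' X Y) :
    j = j' := by
  by_contra hne
  obtain ⟨ha1, ha2, ha3⟩ := h
  obtain ⟨hb1, hb2, hb3⟩ := h'
  have hj : j < Y.length := (List.getElem?_eq_some_iff.mp ha1).1
  have e1 : X[j]? = some true := by
    rw [ha3, List.getElem?_set_ne (by omega), List.getElem?_set_self (by simpa using hj)]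
  rcases eq_or_ne j (j' + 1) with he | he
  · have e2 : X[j]? = some false := by
      subst he
      rw [hb3, List.getElem?_set_self (by simp; omega)]
    rw [e1] at e2; simp at e2
  · have e2 : X[j]? = Y[j]? := by
      rw [hb3, List.getElem?_set_ne (by omega), List.getElem?_set_ne (by omega)]
    rw [e1, ha1] at e2; simp at e2

open Classical in
lemma ite_cl3_sum (X Y : List Bool) (c : ℝ) :
    (if cl3 X Y then c else 0)
      = ∑ j ∈ Finset.range (X.length - 1), if cl3At j X Y then c else 0 := by
  by_cases h : cl3 X Y
  · rw [if_pos h]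
    obtain ⟨j, hj⟩ := cl3_iff.mp h
    have hjlt : j + 1 < X.length := (List.getElem?_eq_some_iff.mp hj.2.1).1
    rw [Finset.sum_eq_single_of_mem j (Finset.mem_range.mpr (by omega))]
    · rw [if_pos hj]
    · intro k _ hkj
      rw [if_neg]
      intro hk'
      exact hkj (cl3At_unique hk' hj)
  · rw [if_neg h]
    symm
    apply Finset.sum_eq_zero
    intro k _
    rw [if_neg]
    intro hk'
    exact h (cl3_iff.mpr ⟨k, hk'⟩)

open Classical in
lemma ite_cl3'_sum (X Y : List Bool) (c : ℝ) :
    (if cl3 X Y then c else 0)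
      = ∑ j ∈ Finset.range (Y.length - 1), if cl3At' j X Y then c else 0 := by
  by_cases h : cl3 X Y
  · rw [if_pos h]
    obtain ⟨j, hj⟩ := cl3_iff'.mp h
    have hjlt : j + 1 < Y.length := (List.getElem?_eq_some_iff.mp hj.2.1).1
    rw [Finset.sum_eq_single_of_mem j (Finset.mem_range.mpr (by omega))]
    · rw [if_pos hj]
    · intro k _ hkj
      rw [if_neg]
      intro hk'
      exact hkj (cl3At'_unique hk' hj)
  · rw [if_neg h]
    symm
    apply Finset.sum_eq_zero
    intro k _
    rw [if_neg]
    intro hk'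
    exact h (cl3_iff'.mpr ⟨k, hk'⟩)

open Classical in
lemma rate_fwd (α β : ℝ) (X Y : List Bool) :
    rate α β X Y = (if cl1 X Y then α else 0) + (if cl2 X Y then β else 0)
      + ∑ j ∈ Finset.range (X.length - 1), (if cl3At j X Y then (1:ℝ) else 0) := by
  rw [rate_def, ← ite_cl3_sum X Y 1]
  by_cases h1 : cl1 X Y
  · rw [if_pos h1, if_pos h1, if_neg (fun h2 => cl12 h1 h2), if_neg (fun h3 => cl13 h1 h3)]
    ring
  · rw [if_neg h1, if_neg h1]
    by_cases h2 : cl2 X Y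
    · rw [if_pos h2, if_pos h2, if_neg (fun h3 => cl23 h2 h3)]; ring
    · rw [if_neg h2, if_neg h2]
      by_cases h3 : cl3 X Y
      · rw [if_pos h3]; norm_num
      · rw [if_neg h3]; norm_num

open Classical in
lemma rate_rev (α β : ℝ) (X Y : List Bool) :
    rate α β X Y = (if cl1 X Y then α else 0) + (if cl2 X Y then β else 0)
      + ∑ j ∈ Finset.range (Y.length - 1), (if cl3At' j X Y then (1:ℝ) else 0) := by
  rw [rate_def, ← ite_cl3'_sum X Y 1]
  by_cases h1 : cl1 X Y
  · rw [if_pos h1, if_pos h1, if_neg (fun h2 => cl12 h1 h2), if_neg (fun h3 => cl13 h1 h3)]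
    ring
  · rw [if_neg h1, if_neg h1]
    by_cases h2 : cl2 X Y
    · rw [if_pos h2, if_pos h2, if_neg (fun h3 => cl23 h2 h3)]; ring
    · rw [if_neg h2, if_neg h2]
      by_cases h3 : cl3 X Y
      · rw [if_pos h3]; norm_num
      · rw [if_neg h3]; norm_num

def upd1 {n : ℕ} (C : Fin n → Bool) (j : ℕ) (b : Bool) : Fin n → Bool :=
  fun i => if i.val = j then b else C i

def upd2 {n : ℕ} (C : Fin n → Bool) (j : ℕ) (b b' : Bool) : Fin n → Bool :=
  fun i => if i.val = j then b else if i.val = j + 1 then b' else C i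

lemma set_ofFn_eq {n : ℕ} (C : Fin n → Bool) (j : ℕ) (hj : j < n) (b : Bool) :
    (List.ofFn C).set j b = List.ofFn (upd1 C j b) := by
  apply List.ext_getElem (by simp)
  intro k h1 h2
  simp only [List.getElem_set, List.getElem_ofFn, upd1]
  rcases eq_or_ne j k with hk | hk
  · subst hk; simp
  · simp [hk, Ne.symm hk]

lemma set2_ofFn_eq {n : ℕ} (C : Fin n → Bool) (j : ℕ) (hj : j + 1 < n) (b b' : Bool) :
    ((List.ofFn C).set j b).set (j+1) b' = List.ofFn (upd2 C j b b') := by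
  apply List.ext_getElem (by simp)
  intro k h1 h2
  simp only [List.getElem_set, List.getElem_ofFn, upd2]
  rcases eq_or_ne j k with hk | hk
  · subst hk; simp
  · rcases eq_or_ne (j+1) k with hk2 | hk2
    · subst hk2; simp [Ne.symm hk]
    · simp [hk, hk2, Ne.symm hk, Ne.symm hk2]

lemma sum_update_ite {n : ℕ} (p : Prop) [Decidable p] (u : Fin n → Bool)
    (f : (Fin n → Bool) → ℝ) :
    ∑ C' : Fin n → Bool, (if p ∧ C' = u then f C' else 0) = if p then f u else 0 := by
  by_cases hp : p
  · simp only [hp, true_and, if_true]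
    rw [Finset.sum_eq_single_of_mem u (Finset.mem_univ u)]
    · rw [if_pos rfl]
    · intro b _ hb; rw [if_neg hb]
  · simp [hp]

open Classical in
lemma OUT_sum {n : ℕ} (hn : 1 ≤ n) (α β : ℝ) (C : Fin n → Bool) :
    ∑ C' : Fin n → Bool, rate α β (List.ofFn C) (List.ofFn C')
      = (if (List.ofFn C)[0]? = some false then α else 0)
        + (if (List.ofFn C).getLast? = some true then β else 0)
        + ∑ j ∈ Finset.range (n - 1),
            (if (List.ofFn C)[j]? = some true ∧ (List.ofFn C)[j+1]? = some false
              then (1:ℝ) else 0) := by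
  have hw : (List.ofFn C).length = n := by simp
  have step : ∀ C' : Fin n → Bool, rate α β (List.ofFn C) (List.ofFn C')
      = (if (List.ofFn C)[0]? = some false ∧ C' = upd1 C 0 true then α else 0)
        + (if (List.ofFn C).getLast? = some true ∧ C' = upd1 C (n-1) false then β else 0)
        + ∑ j ∈ Finset.range (n-1),
            (if ((List.ofFn C)[j]? = some true ∧ (List.ofFn C)[j+1]? = some false)
                ∧ C' = upd2 C j false true
              then (1:ℝ) else 0) := by
    intro C'
    rw [rate_fwd]
    simp only [hw]
    congr 1
    · congr 1
      · apply if_congr _ rfl rfl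
        rw [cl1_iff]
        apply and_congr_right
        intro _
        rw [set_ofFn_eq C 0 (by omega) true, List.ofFn_inj]
      · apply if_congr _ rfl rfl
        rw [cl2_iff, hw]
        apply and_congr_right
        intro _
        rw [set_ofFn_eq C (n-1) (by omega) false, List.ofFn_inj]
    · apply Finset.sum_congr rfl
      intro j hj
      rw [Finset.mem_range] at hj
      apply if_congr _ rfl rfl
      unfold cl3At
      rw [set2_ofFn_eq C j (by omega) false true, List.ofFn_inj, ← and_assoc]
  rw [Finset.sum_congr rfl (fun C' _ => step C')]
  rw [Finset.sum_add_distrib, Finset.sum_add_distrib]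
  congr 1
  · congr 1
    · exact sum_update_ite _ _ (fun _ => α)
    · exact sum_update_ite _ _ (fun _ => β)
  · rw [Finset.sum_comm]
    apply Finset.sum_congr rfl
    intro j hj
    exact sum_update_ite _ _ (fun _ => (1:ℝ))

open Classical in
lemma IN_sum {n : ℕ} (hn : 1 ≤ n) (α β : ℝ) (C : Fin n → Bool) (G : List Bool → ℝ) :
    ∑ C' : Fin n → Bool, G (List.ofFn C') * rate α β (List.ofFn C') (List.ofFn C)
      = (if (List.ofFn C)[0]? = some true
            then G ((List.ofFn C).set 0 false) * α else 0)
        + (if (List.ofFn C).getLast? = some false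
            then G ((List.ofFn C).set (n-1) true) * β else 0)
        + ∑ j ∈ Finset.range (n - 1),
            (if (List.ofFn C)[j]? = some false ∧ (List.ofFn C)[j+1]? = some true
              then G (((List.ofFn C).set j true).set (j+1) false) else 0) := by
  have hw : (List.ofFn C).length = n := by simp
  have step : ∀ C' : Fin n → Bool,
      G (List.ofFn C') * rate α β (List.ofFn C') (List.ofFn C)
      = (if (List.ofFn C)[0]? = some true ∧ C' = upd1 C 0 false
          then G (List.ofFn C') * α else 0)
        + (if (List.ofFn C).getLast? = some false ∧ C' = upd1 C (n-1) true
            then G (List.ofFn C') * β else 0)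
        + ∑ j ∈ Finset.range (n-1),
            (if ((List.ofFn C)[j]? = some false ∧ (List.ofFn C)[j+1]? = some true)
                ∧ C' = upd2 C j true false
              then G (List.ofFn C') else 0) := by
    intro C'
    rw [rate_rev]
    simp only [hw]
    rw [mul_add, mul_add, Finset.mul_sum]
    congr 1
    · congr 1
      · rw [mul_ite, mul_zero]
        apply if_congr _ rfl rfl
        rw [cl1_iff']
        apply and_congr_right
        intro _
        rw [set_ofFn_eq C 0 (by omega) false, List.ofFn_inj]
      · rw [mul_ite, mul_zero]
        apply if_congr _ rfl rfl
        rw [cl2_iff', hw]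
        apply and_congr_right
        intro _
        rw [set_ofFn_eq C (n-1) (by omega) true, List.ofFn_inj]
    · apply Finset.sum_congr rfl
      intro j hj
      rw [Finset.mem_range] at hj
      rw [mul_ite, mul_zero, mul_one]
      apply if_congr _ rfl rfl
      unfold cl3At'
      rw [set2_ofFn_eq C j (by omega) true false, List.ofFn_inj, ← and_assoc]
  rw [Finset.sum_congr rfl (fun C' _ => step C')]
  rw [Finset.sum_add_distrib, Finset.sum_add_distrib]
  congr 1
  · congr 1
    · rw [sum_update_ite _ _ (fun C' => G (List.ofFn C') * α)]
      apply if_congr Iff.rfl _ rfl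
      rw [set_ofFn_eq C 0 (by omega) false]
    · rw [sum_update_ite _ _ (fun C' => G (List.ofFn C') * β)]
      apply if_congr Iff.rfl _ rfl
      rw [set_ofFn_eq C (n-1) (by omega) true]
  · rw [Finset.sum_comm]
    apply Finset.sum_congr rfl
    intro j hj
    rw [Finset.mem_range] at hj
    rw [sum_update_ite _ _ (fun C' => G (List.ofFn C'))]
    apply if_congr Iff.rfl _ rfl
    rw [set2_ofFn_eq C j (by omega) true false]

open Classical in
lemma key_balance {n : ℕ} (hn : 1 ≤ n) (α β : ℝ) (hα : α ≠ 0) (hβ : β ≠ 0)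
    (C : Fin n → Bool) :
    FF α β (List.ofFn C) * (∑ C' : Fin n → Bool, rate α β (List.ofFn C) (List.ofFn C'))
      = ∑ C' : Fin n → Bool,
          FF α β (List.ofFn C') * rate α β (List.ofFn C') (List.ofFn C) := by
  rw [OUT_sum hn, IN_sum hn α β C (FF α β)]
  set w := List.ofFn C with hw0
  have hw : w.length = n := by simp [hw0]
  set G : ℕ → ℝ := fun j => FF α β (w.eraseIdx j) with hG
  set ψ : ℕ → ℝ := fun j => if w[j]? = some true then G j else -G j with hψ
  have hwne : w ≠ [] := by
    intro h; rw [h] at hw; simp at hw; omega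
  -- L1
  have L1 : (if w[0]? = some true then FF α β (w.set 0 false) * α else 0)
      - FF α β w * (if w[0]? = some false then α else 0) = ψ 0 := by
    obtain ⟨w0, t, hwt⟩ : ∃ a t, w = a :: t := by
      cases hv : w with
      | nil => exact absurd hv hwne
      | cons a t => exact ⟨a, t, rfl⟩
    have h0 : w[0]? = some w0 := by rw [hwt]; simp
    have hset : w.set 0 false = false :: t := by rw [hwt]; rfl
    have hei : w.eraseIdx 0 = t := by rw [hwt]; rfl
    have hFA := FF_A α β hα t
    cases w0 with
    | false =>
      simp only [hψ, hG, h0, hei, hset]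
      norm_num
      rw [hwt]
      linarith [hFA]
    | true =>
      simp only [hψ, hG, h0, hei, hset]
      norm_num
      linarith [hFA]
  -- L2
  have L2 : (if w.getLast? = some false then FF α β (w.set (n-1) true) * β else 0)
      - FF α β w * (if w.getLast? = some true then β else 0) = -ψ (n-1) := by
    obtain ⟨A, a, hwt⟩ : ∃ A a, w = A ++ [a] :=
      ⟨w.dropLast, w.getLast hwne, (List.dropLast_append_getLast hwne).symm⟩
    have hA : A.length = n - 1 := by
      have := hw; rw [hwt] at this; simp at this; omega
    have h0 : w.getLast? = some a := by rw [hwt]; simp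
    have h0' : w[n-1]? = some a := by
      rw [hwt, ← hA, List.getElem?_append_right (le_refl _), Nat.sub_self]
      simp
    have hset : w.set (n-1) true = A ++ [true] := by
      rw [hwt, ← hA, set_last]
    have hei : w.eraseIdx (n-1) = A := by
      rw [hwt, ← hA, List.eraseIdx_eq_take_drop_succ,
        List.take_left, List.drop_eq_nil_of_le (by simp), List.append_nil]
    have hFB := FF_B α β hβ A
    cases a with
    | false =>
      simp only [hψ, hG, h0, h0', hei, hset]
      norm_num
      linarith [hFB]
    | true =>
      simp only [hψ, hG, h0, h0', hei, hset]
      norm_num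
      rw [hwt]
      linarith [hFB]
  -- L3
  have L3 : ∀ j ∈ Finset.range (n-1),
      ((if w[j]? = some false ∧ w[j+1]? = some true
          then FF α β ((w.set j true).set (j+1) false) else 0)
        - FF α β w * (if w[j]? = some true ∧ w[j+1]? = some false then (1:ℝ) else 0))
      = ψ (j+1) - ψ j := by
    intro j hj
    rw [Finset.mem_range] at hj
    have hjn : j + 1 < n := by omega
    obtain ⟨x, hx⟩ : ∃ x, w[j]? = some x :=
      ⟨_, List.getElem?_eq_getElem (by omega)⟩
    obtain ⟨y, hy⟩ : ∃ y, w[j+1]? = some y :=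
      ⟨_, List.getElem?_eq_getElem (by omega)⟩
    have hww : w = w.take j ++ x :: y :: w.drop (j+2) := list_decomp_two' hx hy
    have hA : (w.take j).length = j := by simp; omega
    have he1 : w.eraseIdx j = w.take j ++ y :: w.drop (j+2) := by
      rw [List.eraseIdx_eq_take_drop_succ, List.drop_eq_getElem_cons (by omega)]
      have h9 : w[j+1]'(by omega) = y := by
        have := List.getElem?_eq_getElem (l := w) (i := j+1) (by omega)
        rw [hy] at this; exact (Option.some_injective _ this).symm
      rw [h9]
    have he2 : w.eraseIdx (j+1) = w.take j ++ x :: w.drop (j+2) := by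
      rw [List.eraseIdx_eq_take_drop_succ, List.take_succ, hx]
      simp
    have hset2 : (w.set j true).set (j+1) false
        = w.take j ++ true :: false :: w.drop (j+2) := by
      conv_lhs => rw [hww]
      exact set2_mid' _ _ hA _ _ _ _
    have hFC := FF_C α β (w.take j) (w.drop (j+2))
    cases x with
    | true =>
      cases y with
      | false =>
        simp only [hψ, hG, hx, hy, he1, he2]
        norm_num
        conv_lhs => rw [hww]
        linarith [hFC]
      | true =>
        simp only [hψ, hG, hx, hy, he1, he2]
        norm_num
    | false =>
      cases y with
      | true =>
        simp only [hψ, hG, hx, hy, he1, he2, hset2]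
        norm_num
        linarith [hFC]
      | false =>
        simp only [hψ, hG, hx, hy, he1, he2]
        norm_num
  have tele : ∑ j ∈ Finset.range (n-1),
      ((if w[j]? = some false ∧ w[j+1]? = some true
          then FF α β ((w.set j true).set (j+1) false) else 0)
        - FF α β w * (if w[j]? = some true ∧ w[j+1]? = some false then (1:ℝ) else 0))
      = ψ (n-1) - ψ 0 := by
    rw [Finset.sum_congr rfl L3, Finset.sum_range_sub]
  rw [Finset.sum_sub_distrib, ← Finset.mul_sum] at tele
  rw [mul_add, mul_add]
  linarith [L1, L2, tele]

lemma finsum_red_eq {n : ℕ} (α β : ℝ) (D : Fin n → Bool) :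
    (∑ᶠ T : {T : PTree // T.numLeaves = n + 2 ∧ T.red = List.ofFn D}, mu α β T.val)
      = FF α β (List.ofFn D) := by
  have hfin : {T : PTree | T.numLeaves = n + 2 ∧ T.red = List.ofFn D}.Finite :=
    (finite_numLeaves (n+2)).subset (fun T hT => hT.1)
  rw [finsum_subtype_eq_finsum_cond]
  rw [show (∑ᶠ (i : PTree) (_ : i.numLeaves = n + 2 ∧ i.red = List.ofFn D), mu α β i)
      = ∑ᶠ i ∈ {T : PTree | T.numLeaves = n + 2 ∧ T.red = List.ofFn D}, mu α β i from rfl,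
    finsum_mem_eq_finite_toFinset_sum _ hfin, FF]
  apply Finset.sum_congr _ (fun _ _ => rfl)
  ext T
  rw [Set.Finite.mem_toFinset, mem_redF]
  simp [Set.mem_setOf_eq]

lemma finsum_all_eq {n : ℕ} (α β : ℝ) :
    (∑ᶠ T : {T : PTree // T.numLeaves = n + 2}, mu α β T.val)
      = ∑ T ∈ treesN (n+2), mu α β T := by
  rw [finsum_subtype_eq_finsum_cond]
  rw [show (∑ᶠ (i : PTree) (_ : i.numLeaves = n + 2), mu α β i)
      = ∑ᶠ i ∈ {T : PTree | T.numLeaves = n + 2}, mu α β i from rfl,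
    finsum_mem_eq_finite_toFinset_sum _ (finite_numLeaves (n+2))]
  rfl

/-- `P(C) = Z_n⁻¹ Σ_{T ∈ R⁻¹{C}} α^{-l(T)} β^{-r(T)}` is a stationary
measure of the open-boundary TASEP with parameters `α, β ∈ (0,1]`. -/
theorem stationary_general (n : ℕ) (hn : 1 ≤ n) (α β : ℝ)
    (hα : α ∈ Set.Ioc (0:ℝ) 1) (hβ : β ∈ Set.Ioc (0:ℝ) 1) (C : Fin n → Bool) :
    ((∑ᶠ T : {T : PTree // T.numLeaves = n + 2 ∧ T.red = List.ofFn C}, mu α β T.val) /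
          (∑ᶠ T : {T : PTree // T.numLeaves = n + 2}, mu α β T.val)) *
        (∑ C' : Fin n → Bool, rate α β (List.ofFn C) (List.ofFn C'))
      = ∑ C' : Fin n → Bool,
          ((∑ᶠ T : {T : PTree // T.numLeaves = n + 2 ∧ T.red = List.ofFn C'}, mu α β T.val) /
              (∑ᶠ T : {T : PTree // T.numLeaves = n + 2}, mu α β T.val)) *
            rate α β (List.ofFn C') (List.ofFn C) := by
  simp only [finsum_red_eq, finsum_all_eq]
  rw [div_mul_eq_mul_div]
  rw [Finset.sum_congr rfl (fun C' _ => div_mul_eq_mul_div _ _ _), ← Finset.sum_div]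
  rw [key_balance hn α β hα.1.ne' hβ.1.ne' C]
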